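/- Let m ≥ 0. The set of matrices S ∈ M_{(m+2)×2}(K) such that there exist P′ ∈ K^{m+1} and Q, R ∈ K^{m+1} with S·X^1_2 = X^{m+1}_{m+2} P′, S·Y^1_2 = Y^{m+1}_{m+2} Q and S·Z^1_2 = Z^{m+1}_{m+2} R equals { S : S_{m+2,1} = 0, S_{1,2} = 0, and S_{1,1} + S_{1,2} = Σ_{i=2}^{m+2} ε_i (S_{i,1} + S_{i,2}) }, where ε_i = +1 if i ≡ 2 or 3 (mod 4) and ε_i = −1 if i ≡ 0 or 1 (mod 4). In particular this set is a (2m+1)-dimensional subspace of M_{(m+2)×2}(K). -/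

import Mathlib

/-- `X^n_{n+i}`: the `(n+i) × n` matrix whose top `n` rows form the identity and whose
bottom `i` rows are zero. -/
def Xmat (K : Type*) [Field K] (n i : ℕ) : Matrix (Fin (n + i)) (Fin n) K :=
  Matrix.of fun r c => if (r : ℕ) = (c : ℕ) then 1 else 0

/-- `Y^n_{n+i}`: the `(n+i) × n` matrix whose top `i` rows are zero and whose bottom
`n` rows form the identity. -/
def Ymat (K : Type*) [Field K] (n i : ℕ) : Matrix (Fin (n + i)) (Fin n) K :=
  Matrix.of fun r c => if (r : ℕ) = (c : ℕ) + i then 1 else 0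

/-- The matrix `Z^{m+1}_{m+2}`, determined by `(Zr)_1 = r_1 + r_2` and
`(Zr)_i = r_{i-1} + r_{i+1}` for `2 ≤ i ≤ m+2` (1-based, `r_j = 0` for `j > m+1`). -/
def Zmat2 (K : Type*) [Field K] (m : ℕ) : Matrix (Fin (m + 2)) (Fin (m + 1)) K :=
  Matrix.of fun r c =>
    if (r : ℕ) = 0 then (if (c : ℕ) = 0 ∨ (c : ℕ) = 1 then 1 else 0)
    else (if (c : ℕ) + 1 = (r : ℕ) ∨ (c : ℕ) = (r : ℕ) + 1 then 1 else 0)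

/-- `ε_i = +1` if `i ≡ 2, 3 (mod 4)` and `ε_i = -1` if `i ≡ 0, 1 (mod 4)`. -/
def eps4 (K : Type*) [Field K] (i : ℕ) : K :=
  if i % 4 = 2 ∨ i % 4 = 3 then 1 else -1

/-- `Σ_{i=2}^{m+2} ε_i (S_{i,1} + S_{i,2})` (1-based row indices). -/
def rowSum (K : Type*) [Field K] (m : ℕ) (S : Matrix (Fin (m + 2)) (Fin 2) K) : K :=
  ∑ i : Fin (m + 2), (if (i : ℕ) = 0 then 0 else eps4 K ((i : ℕ) + 1)) * (S i 0 + S i 1)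

/-- `S·X^1_2 = X^{m+1}_{m+2} P'`, `S·Y^1_2 = Y^{m+1}_{m+2} Q` and
`S·Z^1_2 = Z^{m+1}_{m+2} R` for some `P', Q, R ∈ K^{m+1}`. -/
def cond6 (K : Type*) [Field K] (m : ℕ) (S : Matrix (Fin (m + 2)) (Fin 2) K) : Prop :=
  ∃ P' Q R : Fin (m + 1) → K,
    S.mulVec ![1, 0] = (Xmat K (m + 1) 1).mulVec P' ∧
    S.mulVec ![0, 1] = (Ymat K (m + 1) 1).mulVec Q ∧
    S.mulVec ![1, 1] = (Zmat2 K m).mulVec R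

section helpers
variable {K : Type*} [Field K]

lemma sum_delta {n : ℕ} (f : Fin n → K) (k : ℕ) :
    ∑ c : Fin n, (if (c : ℕ) = k then f c else 0) = if h : k < n then f ⟨k, h⟩ else 0 := by
  split_ifs with h
  · have hc : ∀ c : Fin n, (if (c : ℕ) = k then f c else 0) = if c = ⟨k, h⟩ then f c else 0 := by
      intro c; simp [Fin.ext_iff]
    rw [Finset.sum_congr rfl fun c _ => hc c, Finset.sum_ite_eq']
    simp
  · refine Finset.sum_eq_zero fun c _ => ?_
    have := c.isLt
    rw [if_neg]; omega


lemma eps4_add_two (n : ℕ) : eps4 K (n + 2) = - eps4 K n := by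
  simp only [eps4]
  split_ifs <;> first | omega | norm_num

lemma eps4_odd (j : ℕ) (h : j % 2 = 1) : eps4 K (j + 1) = (-1) ^ ((j - 1) / 2) := by
  have h4 : j % 4 = 1 ∨ j % 4 = 3 := by omega
  rcases h4 with h4 | h4
  · have e1 : (j - 1) / 2 = 2 * (j / 4) := by omega
    have e2 : (j + 1) % 4 = 2 := by omega
    rw [e1, pow_mul]
    simp [eps4, e2]
  · have e1 : (j - 1) / 2 = 2 * (j / 4) + 1 := by omega
    have e2 : (j + 1) % 4 = 0 := by omega
    rw [e1, pow_succ, pow_mul]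
    simp [eps4, e2]

lemma eps4_even (j : ℕ) (h0 : 1 ≤ j) (h : j % 2 = 0) :
    eps4 K (j + 1) = (-1) ^ ((j - 2) / 2) := by
  have h4 : j % 4 = 0 ∨ j % 4 = 2 := by omega
  rcases h4 with h4 | h4
  · have e1 : (j - 2) / 2 = 2 * (j / 4 - 1) + 1 := by omega
    have e2 : (j + 1) % 4 = 1 := by omega
    rw [e1, pow_succ, pow_mul]
    simp [eps4, e2]
  · have e1 : (j - 2) / 2 = 2 * (j / 4) := by omega
    have e2 : (j + 1) % 4 = 3 := by omega
    rw [e1, pow_mul]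
    simp [eps4, e2]

lemma key_col (m : ℕ) (c : Fin (m + 1)) :
    ∑ i : Fin (m + 2), (if (i : ℕ) = 0 then (-1 : K) else eps4 K ((i : ℕ) + 1)) * Zmat2 K m i c
      = 0 := by
  rw [Fin.sum_univ_succ]
  have h1 : ∀ i : Fin (m + 1),
      (if ((i.succ : Fin (m + 2)) : ℕ) = 0 then (-1 : K)
          else eps4 K (((i.succ : Fin (m + 2)) : ℕ) + 1)) * Zmat2 K m i.succ c
      = (if (i : ℕ) = (c : ℕ) then eps4 K ((c : ℕ) + 2) else 0)
        + (if (i : ℕ) = (c : ℕ) - 2 ∧ 2 ≤ (c : ℕ) then eps4 K (c : ℕ) else 0) := by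
    intro i
    have hne : ¬ ((i : ℕ) + 1 = 0) := by omega
    simp only [Zmat2, Matrix.of_apply, Fin.val_succ, if_neg hne]
    split_ifs <;>
      first
        | omega
        | ring1
        | (rw [show (i : ℕ) + 1 + 1 = (c : ℕ) + 2 from by omega]; ring1)
        | (rw [show (i : ℕ) + 1 + 1 = (c : ℕ) from by omega]; ring1)
  rw [Finset.sum_congr rfl fun i _ => h1 i, Finset.sum_add_distrib]
  have h2 : ∑ i : Fin (m + 1),
      (if (i : ℕ) = (c : ℕ) - 2 ∧ 2 ≤ (c : ℕ) then eps4 K (c : ℕ) else 0)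
      = if 2 ≤ (c : ℕ) then eps4 K (c : ℕ) else 0 := by
    by_cases hc : 2 ≤ (c : ℕ)
    · have hterm : ∀ i : Fin (m + 1),
          (if (i : ℕ) = (c : ℕ) - 2 ∧ 2 ≤ (c : ℕ) then eps4 K (c : ℕ) else 0)
          = if (i : ℕ) = (c : ℕ) - 2 then eps4 K (c : ℕ) else 0 := by
        intro i; split_ifs <;> first | rfl | omega
      rw [if_pos hc, Finset.sum_congr rfl fun i _ => hterm i,
        sum_delta (fun _ : Fin (m + 1) => eps4 K (c : ℕ)) ((c : ℕ) - 2),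
        dif_pos (show (c : ℕ) - 2 < m + 1 from by have := c.isLt; omega)]
    · rw [if_neg hc]
      exact Finset.sum_eq_zero fun i _ => if_neg (by omega)
  have h3 : ∑ i : Fin (m + 1), (if (i : ℕ) = (c : ℕ) then eps4 K ((c : ℕ) + 2) else 0)
      = eps4 K ((c : ℕ) + 2) := by
    rw [sum_delta (fun _ : Fin (m + 1) => eps4 K ((c : ℕ) + 2)) (c : ℕ), dif_pos c.isLt]
  have hhead : (if ((0 : Fin (m + 2)) : ℕ) = 0 then (-1 : K)
      else eps4 K (((0 : Fin (m + 2)) : ℕ) + 1)) * Zmat2 K m 0 c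
      = if 2 ≤ (c : ℕ) then 0 else -1 := by
    have h0 : ((0 : Fin (m + 2)) : ℕ) = 0 := rfl
    simp only [Zmat2, Matrix.of_apply, h0, if_pos rfl]
    by_cases hc : 2 ≤ (c : ℕ)
    · rw [if_pos hc, if_neg (show ¬ ((c : ℕ) = 0 ∨ (c : ℕ) = 1) from by omega)]; simp
    · rw [if_neg hc, if_pos (show (c : ℕ) = 0 ∨ (c : ℕ) = 1 from by omega)]; simp
  rw [h2, h3, hhead]
  by_cases hc : 2 ≤ (c : ℕ)
  · rw [if_pos hc, if_pos hc, eps4_add_two]; ring1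
  · rw [if_neg hc, if_neg hc]
    have h01 : (c : ℕ) = 0 ∨ (c : ℕ) = 1 := by omega
    have he : eps4 K ((c : ℕ) + 2) = 1 := by
      rcases h01 with h | h <;> rw [h] <;> simp [eps4]
    rw [he]; ring1

end helpers

/-- The back-substitution solution. -/
def Ffun (K : Type*) [Field K] (m : ℕ) (v : Fin (m + 2) → K) (c : ℕ) : K :=
  ∑ j : Fin (m + 2),
    if c < (j : ℕ) ∧ ((j : ℕ) - c) % 2 = 1 then (-1 : K) ^ (((j : ℕ) - c - 1) / 2) * v j else 0

section Flem
variable {K : Type*} [Field K]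

lemma Ffun_zero (m : ℕ) (v : Fin (m + 2) → K) (c : ℕ) (hc : m + 1 ≤ c) :
    Ffun K m v c = 0 := by
  refine Finset.sum_eq_zero fun j _ => ?_
  have := j.isLt
  rw [if_neg (by omega)]

lemma Ffun_rec (m : ℕ) (v : Fin (m + 2) → K) (c : ℕ) :
    Ffun K m v c + Ffun K m v (c + 2) = if h : c + 1 < m + 2 then v ⟨c + 1, h⟩ else 0 := by
  have key : ∀ j : Fin (m + 2),
      ((if c < (j : ℕ) ∧ ((j : ℕ) - c) % 2 = 1 then (-1 : K) ^ (((j : ℕ) - c - 1) / 2) * v j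
          else 0)
        + (if c + 2 < (j : ℕ) ∧ ((j : ℕ) - (c + 2)) % 2 = 1 then
            (-1 : K) ^ (((j : ℕ) - (c + 2) - 1) / 2) * v j else 0))
      = if (j : ℕ) = c + 1 then v j else 0 := by
    intro j
    by_cases h1 : (j : ℕ) = c + 1
    · rw [if_pos h1, if_pos (show c < (j:ℕ) ∧ ((j:ℕ) - c) % 2 = 1 from by omega),
        if_neg (show ¬(c + 2 < (j:ℕ) ∧ ((j:ℕ) - (c+2)) % 2 = 1) from by omega),
        show ((j : ℕ) - c - 1) / 2 = 0 from by omega, pow_zero, one_mul, add_zero]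
    · rw [if_neg h1]
      by_cases h2 : c < (j : ℕ) ∧ ((j : ℕ) - c) % 2 = 1
      · rw [if_pos h2, if_pos (show c + 2 < (j:ℕ) ∧ ((j:ℕ) - (c+2)) % 2 = 1 from by omega),
          show ((j : ℕ) - c - 1) / 2 = ((j : ℕ) - (c + 2) - 1) / 2 + 1 from by omega,
          pow_succ]
        ring1
      · rw [if_neg h2, if_neg (show ¬(c + 2 < (j:ℕ) ∧ ((j:ℕ) - (c+2)) % 2 = 1) from by omega),
          add_zero]
  unfold Ffun
  rw [← Finset.sum_add_distrib, Finset.sum_congr rfl fun j _ => key j, sum_delta]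

lemma Ffun_01 (m : ℕ) (v : Fin (m + 2) → K) :
    Ffun K m v 0 + Ffun K m v 1
      = ∑ i : Fin (m + 2), (if (i : ℕ) = 0 then 0 else eps4 K ((i : ℕ) + 1)) * v i := by
  unfold Ffun
  rw [← Finset.sum_add_distrib]
  refine Finset.sum_congr rfl fun j _ => ?_
  by_cases hj0 : (j : ℕ) = 0
  · rw [if_neg (by omega), if_neg (by omega), if_pos hj0]; ring1
  · rw [if_neg hj0]
    by_cases hodd : (j : ℕ) % 2 = 1
    · rw [if_pos (by omega), if_neg (by omega), eps4_odd (j : ℕ) hodd,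
        show ((j : ℕ) - 0 - 1) / 2 = ((j : ℕ) - 1) / 2 from by omega]
      ring1
    · rw [if_neg (by omega), if_pos (by omega), eps4_even (j : ℕ) (by omega) (by omega),
        show ((j : ℕ) - 1 - 1) / 2 = ((j : ℕ) - 2) / 2 from by omega]
      ring1
end Flem

section zr
variable {K : Type*} [Field K]

lemma zrange (m : ℕ) (v : Fin (m + 2) → K) :
    (∃ R : Fin (m + 1) → K, v = (Zmat2 K m).mulVec R) ↔
      v 0 = ∑ i : Fin (m + 2), (if (i : ℕ) = 0 then 0 else eps4 K ((i : ℕ) + 1)) * v i := by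
  constructor
  · rintro ⟨R, rfl⟩
    set w := (Zmat2 K m).mulVec R with hw
    have expand : ∀ i, w i = ∑ c : Fin (m + 1), Zmat2 K m i c * R c := fun i => rfl
    have swap : ∑ i : Fin (m + 2),
        (if (i : ℕ) = 0 then (-1 : K) else eps4 K ((i : ℕ) + 1)) * w i = 0 := by
      have e1 : ∀ i : Fin (m + 2),
          (if (i : ℕ) = 0 then (-1 : K) else eps4 K ((i : ℕ) + 1)) * w i
          = ∑ c : Fin (m + 1),
              ((if (i : ℕ) = 0 then (-1 : K) else eps4 K ((i : ℕ) + 1)) * Zmat2 K m i c) * R c := by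
        intro i
        rw [expand, Finset.mul_sum]
        exact Finset.sum_congr rfl fun c _ => by ring1
      rw [Finset.sum_congr rfl fun i _ => e1 i, Finset.sum_comm]
      refine Finset.sum_eq_zero fun c _ => ?_
      rw [← Finset.sum_mul, key_col m c, zero_mul]
    have split : ∀ i : Fin (m + 2),
        (if (i : ℕ) = 0 then (-1 : K) else eps4 K ((i : ℕ) + 1)) * w i
        = (if (i : ℕ) = 0 then 0 else eps4 K ((i : ℕ) + 1)) * w i
          - (if (i : ℕ) = 0 then w i else 0) := by
      intro i; split_ifs <;> ring1
    rw [Finset.sum_congr rfl fun i _ => split i, Finset.sum_sub_distrib,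
      sum_delta (fun i => w i) 0, dif_pos (show 0 < m + 2 from by omega),
      sub_eq_zero] at swap
    have h0 : (⟨0, show 0 < m + 2 from by omega⟩ : Fin (m + 2)) = 0 := rfl
    rw [h0] at swap
    exact swap.symm
  · intro hv
    refine ⟨fun c => Ffun K m v (c : ℕ), ?_⟩
    funext i
    have expand : (Zmat2 K m).mulVec (fun c => Ffun K m v (c : ℕ)) i
        = ∑ c : Fin (m + 1), Zmat2 K m i c * Ffun K m v (c : ℕ) := rfl
    rw [expand]
    by_cases hi : (i : ℕ) = 0
    · have hterm : ∀ c : Fin (m + 1), Zmat2 K m i c * Ffun K m v (c : ℕ)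
          = (if (c : ℕ) = 0 then Ffun K m v 0 else 0)
            + (if (c : ℕ) = 1 then Ffun K m v 1 else 0) := by
        intro c
        simp only [Zmat2, Matrix.of_apply, if_pos hi]
        by_cases h0 : (c : ℕ) = 0
        · rw [if_pos (Or.inl h0), if_pos h0, if_neg (by omega), h0]; ring1
        · by_cases h1 : (c : ℕ) = 1
          · rw [if_pos (Or.inr h1), if_neg h0, if_pos h1, h1]; ring1
          · rw [if_neg (by omega), if_neg h0, if_neg h1]; ring1
      rw [Finset.sum_congr rfl fun c _ => hterm c, Finset.sum_add_distrib,
        sum_delta (fun _ : Fin (m + 1) => Ffun K m v 0) 0,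
        sum_delta (fun _ : Fin (m + 1) => Ffun K m v 1) 1,
        dif_pos (show 0 < m + 1 from by omega)]
      have hi0 : i = 0 := Fin.ext (by simpa using hi)
      have hcomb : Ffun K m v 0 + Ffun K m v 1 = v 0 := by rw [Ffun_01 m v, ← hv]
      by_cases hm : 1 < m + 1
      · rw [dif_pos hm, hi0, ← hcomb]
      · rw [dif_neg hm, hi0, ← hcomb, Ffun_zero m v 1 (by omega)]
    · have hterm : ∀ c : Fin (m + 1), Zmat2 K m i c * Ffun K m v (c : ℕ)
          = (if (c : ℕ) = (i : ℕ) - 1 then Ffun K m v ((i : ℕ) - 1) else 0)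
            + (if (c : ℕ) = (i : ℕ) + 1 then Ffun K m v ((i : ℕ) + 1) else 0) := by
        intro c
        simp only [Zmat2, Matrix.of_apply, if_neg hi]
        by_cases h0 : (c : ℕ) + 1 = (i : ℕ)
        · rw [if_pos (Or.inl h0), if_pos (show (c : ℕ) = (i : ℕ) - 1 from by omega),
            if_neg (by omega), show (c : ℕ) = (i : ℕ) - 1 from by omega]
          ring1
        · by_cases h1 : (c : ℕ) = (i : ℕ) + 1
          · rw [if_pos (Or.inr h1), if_neg (by omega), if_pos h1, h1]; ring1
          · rw [if_neg (by omega), if_neg (by omega), if_neg h1]; ring1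
      rw [Finset.sum_congr rfl fun c _ => hterm c, Finset.sum_add_distrib,
        sum_delta (fun _ : Fin (m + 1) => Ffun K m v ((i : ℕ) - 1)) ((i : ℕ) - 1),
        sum_delta (fun _ : Fin (m + 1) => Ffun K m v ((i : ℕ) + 1)) ((i : ℕ) + 1),
        dif_pos (show (i : ℕ) - 1 < m + 1 from by have := i.isLt; omega)]
      have hrec := Ffun_rec m v ((i : ℕ) - 1)
      rw [show (i : ℕ) - 1 + 2 = (i : ℕ) + 1 from by omega,
        show (i : ℕ) - 1 + 1 = (i : ℕ) from by omega, dif_pos i.isLt] at hrec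
      have heta : (⟨(i : ℕ), i.isLt⟩ : Fin (m + 2)) = i := Fin.eta i i.isLt
      rw [heta] at hrec
      by_cases hm : (i : ℕ) + 1 < m + 1
      · rw [dif_pos hm, ← hrec]
      · rw [dif_neg hm, ← hrec, Ffun_zero m v ((i : ℕ) + 1) (by omega)]
end zr

section part1
variable {K : Type*} [Field K]

lemma xmv (m : ℕ) (P' : Fin (m + 1) → K) (j : Fin (m + 2)) :
    (Xmat K (m + 1) 1).mulVec P' j = if h : (j : ℕ) < m + 1 then P' ⟨(j : ℕ), h⟩ else 0 := by
  have expand : (Xmat K (m + 1) 1).mulVec P' j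
      = ∑ c : Fin (m + 1), Xmat K (m + 1) 1 j c * P' c := rfl
  have hterm : ∀ c : Fin (m + 1), Xmat K (m + 1) 1 j c * P' c
      = if (c : ℕ) = (j : ℕ) then P' c else 0 := by
    intro c; simp only [Xmat, Matrix.of_apply]
    split_ifs <;> first | ring1 | omega
  rw [expand, Finset.sum_congr rfl fun c _ => hterm c, sum_delta]

lemma ymv (m : ℕ) (Q : Fin (m + 1) → K) (j : Fin (m + 2)) :
    (Ymat K (m + 1) 1).mulVec Q j
      = if h : 1 ≤ (j : ℕ) then Q ⟨(j : ℕ) - 1, by have := j.isLt; omega⟩ else 0 := by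
  have expand : (Ymat K (m + 1) 1).mulVec Q j
      = ∑ c : Fin (m + 1), Ymat K (m + 1) 1 j c * Q c := rfl
  have hterm : ∀ c : Fin (m + 1), Ymat K (m + 1) 1 j c * Q c
      = if (c : ℕ) = (j : ℕ) - 1 ∧ 1 ≤ (j : ℕ) then Q c else 0 := by
    intro c; simp only [Ymat, Matrix.of_apply]
    split_ifs <;> first | ring1 | omega
  rw [expand, Finset.sum_congr rfl fun c _ => hterm c]
  by_cases hj : 1 ≤ (j : ℕ)
  · have hterm2 : ∀ c : Fin (m + 1),
        (if (c : ℕ) = (j : ℕ) - 1 ∧ 1 ≤ (j : ℕ) then Q c else 0)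
        = if (c : ℕ) = (j : ℕ) - 1 then Q c else 0 := by
      intro c; split_ifs <;> first | rfl | omega
    rw [dif_pos hj, Finset.sum_congr rfl fun c _ => hterm2 c, sum_delta Q ((j : ℕ) - 1),
      dif_pos (show (j : ℕ) - 1 < m + 1 from by have := j.isLt; omega)]
  · rw [dif_neg hj]
    exact Finset.sum_eq_zero fun c _ => if_neg (by omega)

end part1

section part2
variable {K : Type*} [Field K]

lemma rowSum_add (m : ℕ) (S T : Matrix (Fin (m + 2)) (Fin 2) K) :
    rowSum K m (S + T) = rowSum K m S + rowSum K m T := by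
  unfold rowSum
  rw [← Finset.sum_add_distrib]
  refine Finset.sum_congr rfl fun i _ => ?_
  simp only [Matrix.add_apply]
  ring1

lemma rowSum_smul (m : ℕ) (a : K) (S : Matrix (Fin (m + 2)) (Fin 2) K) :
    rowSum K m (a • S) = a * rowSum K m S := by
  unfold rowSum
  rw [Finset.mul_sum]
  refine Finset.sum_congr rfl fun i _ => ?_
  simp only [Matrix.smul_apply, smul_eq_mul]
  ring1

lemma vec3_eq_zero (a b c : K) : (![a, b, c] = 0) ↔ a = 0 ∧ b = 0 ∧ c = 0 := by
  constructor
  · intro h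
    have h0 := congrFun h 0
    have h1 := congrFun h 1
    have h2 := congrFun h 2
    simp at h0 h1 h2
    exact ⟨h0, h1, h2⟩
  · rintro ⟨ha, hb, hc⟩
    funext j
    fin_cases j <;> simp [ha, hb, hc]

end part2

def phi6 (K : Type*) [Field K] (m : ℕ) :
    Matrix (Fin (m + 2)) (Fin 2) K →ₗ[K] (Fin 3 → K) where
  toFun S := ![S ⟨m + 1, Nat.lt_succ_self (m + 1)⟩ 0, S 0 1, S 0 0 + S 0 1 - rowSum K m S]
  map_add' S T := by
    funext j
    fin_cases j <;> simp [Matrix.add_apply, rowSum_add] <;> ring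
  map_smul' a S := by
    funext j
    fin_cases j <;> simp [Matrix.smul_apply, rowSum_smul, smul_eq_mul] <;> ring

section part3
variable {K : Type*} [Field K]

lemma phi6_apply (m : ℕ) (S : Matrix (Fin (m + 2)) (Fin 2) K) :
    phi6 K m S = ![S ⟨m + 1, Nat.lt_succ_self (m + 1)⟩ 0, S 0 1, S 0 0 + S 0 1 - rowSum K m S] := rfl

lemma phi6_surj (m : ℕ) : Function.Surjective (phi6 K m) := by
  intro u
  set t : K := u 2 - u 1 + eps4 K (m + 2) * u 0 with ht
  set S : Matrix (Fin (m + 2)) (Fin 2) K := Matrix.of fun i j =>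
    if (j : ℕ) = 0 then (if (i : ℕ) = m + 1 then u 0 else if (i : ℕ) = 0 then t else 0)
    else (if (i : ℕ) = 0 then u 1 else 0) with hS
  refine ⟨S, ?_⟩
  have hS0 : ∀ i : Fin (m + 2),
      S i 0 = if (i : ℕ) = m + 1 then u 0 else if (i : ℕ) = 0 then t else 0 := by
    intro i
    show (if ((0 : Fin 2) : ℕ) = 0 then (if (i : ℕ) = m + 1 then u 0 else if (i : ℕ) = 0 then t else 0) else (if (i : ℕ) = 0 then u 1 else 0)) = _
    rw [if_pos (show ((0 : Fin 2) : ℕ) = 0 from rfl)]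
  have hS1 : ∀ i : Fin (m + 2), S i 1 = if (i : ℕ) = 0 then u 1 else 0 := by
    intro i
    show (if ((1 : Fin 2) : ℕ) = 0 then (if (i : ℕ) = m + 1 then u 0 else if (i : ℕ) = 0 then t else 0) else (if (i : ℕ) = 0 then u 1 else 0)) = _
    rw [if_neg (show ¬ ((1 : Fin 2) : ℕ) = 0 from by norm_num)]
  have hrs : rowSum K m S = eps4 K (m + 2) * u 0 := by
    unfold rowSum
    have hterm : ∀ i : Fin (m + 2),
        (if (i : ℕ) = 0 then 0 else eps4 K ((i : ℕ) + 1)) * (S i 0 + S i 1)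
        = if (i : ℕ) = m + 1 then eps4 K (m + 2) * u 0 else 0 := by
      intro i
      rw [hS0, hS1]
      by_cases h1 : (i : ℕ) = 0
      · have h2 : ¬ (i : ℕ) = m + 1 := by omega
        simp only [if_pos h1, if_neg h2]
        ring1
      · by_cases h2 : (i : ℕ) = m + 1
        · simp only [if_neg h1, if_pos h2, show (i : ℕ) + 1 = m + 2 from by omega]
          ring1
        · simp only [if_neg h1, if_neg h2]
          ring1
    rw [Finset.sum_congr rfl fun i _ => hterm i,
      sum_delta (fun _ : Fin (m + 2) => eps4 K (m + 2) * u 0) (m + 1),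
      dif_pos (show m + 1 < m + 2 from by omega)]
  rw [phi6_apply, hrs]
  funext j
  fin_cases j
  · show S ⟨m + 1, by omega⟩ 0 = u 0
    rw [hS0, show ((⟨m + 1, by omega⟩ : Fin (m + 2)) : ℕ) = m + 1 from rfl, if_pos rfl]
  · show S 0 1 = u 1
    rw [hS1, show ((0 : Fin (m + 2)) : ℕ) = 0 from rfl, if_pos rfl]
  · show S 0 0 + S 0 1 - eps4 K (m + 2) * u 0 = u 2
    rw [hS0, hS1, show ((0 : Fin (m + 2)) : ℕ) = 0 from rfl,
      if_neg (show ¬ (0 : ℕ) = m + 1 from by omega), if_pos rfl, if_pos rfl, ht]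
    ring1

end part3

theorem stmt6 (K : Type*) [Field K] (m : ℕ) :
    (∀ S : Matrix (Fin (m + 2)) (Fin 2) K,
      cond6 K m S ↔
        (S ⟨m + 1, by omega⟩ 0 = 0 ∧ S 0 1 = 0 ∧ S 0 0 + S 0 1 = rowSum K m S)) ∧
    ∃ W : Submodule K (Matrix (Fin (m + 2)) (Fin 2) K),
      (∀ S, S ∈ W ↔ cond6 K m S) ∧ Module.finrank K W = 2 * m + 1 := by
  have main : ∀ S : Matrix (Fin (m + 2)) (Fin 2) K,
      cond6 K m S ↔
        (S ⟨m + 1, by omega⟩ 0 = 0 ∧ S 0 1 = 0 ∧ S 0 0 + S 0 1 = rowSum K m S) := by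
    intro S
    have hv10 : ∀ j, S.mulVec ![1, 0] j = S j 0 := by
      intro j; simp [Matrix.mulVec, dotProduct, Fin.sum_univ_two]
    have hv01 : ∀ j, S.mulVec ![0, 1] j = S j 1 := by
      intro j; simp [Matrix.mulVec, dotProduct, Fin.sum_univ_two]
    have hv11 : ∀ j, S.mulVec ![1, 1] j = S j 0 + S j 1 := by
      intro j; simp [Matrix.mulVec, dotProduct, Fin.sum_univ_two]
    constructor
    · rintro ⟨P', Q, R, hP, hQ, hR⟩
      refine ⟨?_, ?_, ?_⟩
      · have h := congrFun hP ⟨m + 1, by omega⟩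
        rw [hv10, xmv, dif_neg (show ¬ ((⟨m + 1, by omega⟩ : Fin (m + 2)) : ℕ) < m + 1 from by
          rw [show ((⟨m + 1, by omega⟩ : Fin (m + 2)) : ℕ) = m + 1 from rfl]; omega)] at h
        exact h
      · have h := congrFun hQ 0
        rw [hv01, ymv, dif_neg (show ¬ 1 ≤ ((0 : Fin (m + 2)) : ℕ) from by
          rw [show ((0 : Fin (m + 2)) : ℕ) = 0 from rfl]; omega)] at h
        exact h
      · have hveq : S.mulVec ![1, 1] = fun j => S j 0 + S j 1 := funext hv11
        have h := (zrange m (fun j => S j 0 + S j 1)).mp ⟨R, by rw [← hveq]; exact hR⟩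
        exact h
    · rintro ⟨hx, hy, hz⟩
      have hz' : (fun j => S j 0 + S j 1) (0 : Fin (m + 2))
          = ∑ i : Fin (m + 2), (if (i : ℕ) = 0 then 0 else eps4 K ((i : ℕ) + 1))
              * ((fun j => S j 0 + S j 1) i) := hz
      obtain ⟨R, hR⟩ := (zrange m (fun j => S j 0 + S j 1)).mpr hz'
      refine ⟨fun c => S ⟨(c : ℕ), by have := c.isLt; omega⟩ 0,
        fun c => S ⟨(c : ℕ) + 1, by have := c.isLt; omega⟩ 1, R, ?_, ?_, ?_⟩
      · funext j
        rw [hv10, xmv]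
        split_ifs with h
        · exact congrFun (congrArg S (Fin.ext rfl)) 0
        · rw [show j = (⟨m + 1, by omega⟩ : Fin (m + 2)) from Fin.ext (by
            have := j.isLt
            rw [show ((⟨m + 1, by omega⟩ : Fin (m + 2)) : ℕ) = m + 1 from rfl]; omega)]
          exact hx
      · funext j
        rw [hv01, ymv]
        split_ifs with h
        · exact congrFun (congrArg S (Fin.ext (show (j : ℕ) = (j : ℕ) - 1 + 1 from by omega))) 1
        · rw [show j = (0 : Fin (m + 2)) from Fin.ext (by
            rw [show ((0 : Fin (m + 2)) : ℕ) = 0 from rfl]; omega)]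
          exact hy
      · rw [show S.mulVec ![1, 1] = fun j => S j 0 + S j 1 from funext hv11]
        exact hR
  refine ⟨main, LinearMap.ker (phi6 K m), fun S => ?_, ?_⟩
  · rw [LinearMap.mem_ker, phi6_apply, vec3_eq_zero, sub_eq_zero]
    exact (main S).symm
  · have h1 := LinearMap.finrank_range_add_finrank_ker (phi6 K m)
    rw [LinearMap.range_eq_top.mpr (phi6_surj m), finrank_top] at h1
    rw [Module.finrank_fin_fun, Module.finrank_matrix] at h1
    simp only [Fintype.card_fin, Module.finrank_self, mul_one] at h1
    omega
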